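/- arXiv:1309.3343 — 4 statements merged into one kernel-verified Lean document; each statement's English description precedes it below -/
import Mathlib

section
/- For f in the Schwartz space on ℝⁿ and h in the Schwartz space on ℝ, the Fourier transform of the windowed ray transform P_h f(u,v) = ∫_ℝ f(u+tv) h(t) dt with respect to the first variable u satisfies (P_h f)^(ξ, v) = f̂(ξ) · ĥ(−ξ·v), where f̂ is the n-dimensional Fourier transform of f and ĥ the 1-dimensional Fourier transform of h. -/
open MeasureTheory Real Complex SchwartzMap
open scoped RealInnerProductSpace

/-- The windowed ray transform `P_h f (u, v) = ∫ f(u + t v) h(t) dt`. -/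
noncomputable def windowedRay {n : ℕ} (h : ℝ → ℂ) (f : EuclideanSpace ℝ (Fin n) → ℂ)
    (u v : EuclideanSpace ℝ (Fin n)) : ℂ :=
  ∫ t : ℝ, f (u + t • v) * h t

/-- One-dimensional Fourier transform with convention `ĝ(ξ) = ∫ g(t) e^{-i t ξ} dt`. -/
noncomputable def ft1 (g : ℝ → ℂ) (ξ : ℝ) : ℂ :=
  ∫ t : ℝ, g t * Complex.exp (-(Complex.I * t * ξ))

/-- n-dimensional Fourier transform with convention `ĝ(ξ) = ∫ g(x) e^{-i x·ξ} dx`. -/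
noncomputable def ftn {n : ℕ} (g : EuclideanSpace ℝ (Fin n) → ℂ)
    (ξ : EuclideanSpace ℝ (Fin n)) : ℂ :=
  ∫ x : EuclideanSpace ℝ (Fin n), g x * Complex.exp (-(Complex.I * (⟪x, ξ⟫ : ℝ)))

theorem stmt0 {n : ℕ} (f : SchwartzMap (EuclideanSpace ℝ (Fin n)) ℂ) (h : SchwartzMap ℝ ℂ)
    (ξ v : EuclideanSpace ℝ (Fin n)) :
    ftn (fun u => windowedRay h f u v) ξ = ftn f ξ * ft1 h (-⟪ξ, v⟫) := by
  have hmp : MeasurePreserving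
      (fun p : EuclideanSpace ℝ (Fin n) × ℝ => (p.1 + p.2 • v, p.2))
      (volume.prod volume) (volume.prod volume) := by
    have h1 : MeasurePreserving (fun q : ℝ × EuclideanSpace ℝ (Fin n) => (q.1, q.2 + q.1 • v))
        (volume.prod volume) (volume.prod volume) :=
      (MeasurePreserving.id _).skew_product (by fun_prop)
        (Filter.Eventually.of_forall fun t =>
          (measurePreserving_add_right (volume : Measure (EuclideanSpace ℝ (Fin n))) (t • v)).map_eq)
    have := (Measure.measurePreserving_swap.comp h1).comp
      (Measure.measurePreserving_swap (μ := (volume : Measure (EuclideanSpace ℝ (Fin n)))) (ν := volume))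
    simpa [Function.comp_def] using this
  have hint3 : Integrable (fun p : EuclideanSpace ℝ (Fin n) × ℝ => f (p.1 + p.2 • v) * h p.2)
      (volume.prod volume) := by
    have hm2 : AEStronglyMeasurable
        (fun q : EuclideanSpace ℝ (Fin n) × ℝ => f q.1 * h q.2) (volume.prod volume) :=
      ((f.continuous.comp continuous_fst).mul (h.continuous.comp continuous_snd)).aestronglyMeasurable
    have := (hmp.integrable_comp hm2).2 (f.integrable.mul_prod h.integrable)
    simpa [Function.comp_def] using this
  have hexp_norm : ∀ r : ℝ, ‖Complex.exp (-(Complex.I * (r : ℂ)))‖ = 1 := by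
    intro r
    simp [Complex.norm_exp]
  have hint : Integrable (Function.uncurry fun (u : EuclideanSpace ℝ (Fin n)) (t : ℝ) =>
      f (u + t • v) * h t * Complex.exp (-(Complex.I * ((⟪u, ξ⟫ : ℝ) : ℂ)))) (volume.prod volume) := by
    have hm : AEStronglyMeasurable
        (fun p : EuclideanSpace ℝ (Fin n) × ℝ =>
          Complex.exp (-(Complex.I * ((⟪p.1, ξ⟫ : ℝ) : ℂ)))) (volume.prod volume) := by
      exact (Complex.continuous_exp.comp ((continuous_const.mul
        (Complex.continuous_ofReal.comp (continuous_fst.inner continuous_const))).neg)).aestronglyMeasurable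
    have hb := hint3.bdd_mul hm (c := 1) (Filter.Eventually.of_forall fun p => le_of_eq (hexp_norm _))
    exact hb.congr (Filter.Eventually.of_forall fun p => by
      simp [Function.uncurry, mul_comm])
  have key : ∀ t : ℝ,
      (∫ u : EuclideanSpace ℝ (Fin n),
        f (u + t • v) * h t * Complex.exp (-(Complex.I * ((⟪u, ξ⟫ : ℝ) : ℂ)))) =
      (∫ x : EuclideanSpace ℝ (Fin n),
        f x * Complex.exp (-(Complex.I * ((⟪x, ξ⟫ : ℝ) : ℂ)))) *
      (h t * Complex.exp (Complex.I * (t : ℂ) * ((⟪ξ, v⟫ : ℝ) : ℂ))) := by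
    intro t
    have htr := integral_add_right_eq_self (μ := (volume : Measure (EuclideanSpace ℝ (Fin n))))
        (fun u : EuclideanSpace ℝ (Fin n) =>
          f u * h t * Complex.exp (-(Complex.I * (((⟪u, ξ⟫ : ℝ) : ℂ) - (t : ℂ) * ((⟪ξ, v⟫ : ℝ) : ℂ)))))
        (t • v)
    have h1 : ∀ u : EuclideanSpace ℝ (Fin n),
        ((⟪u + t • v, ξ⟫ : ℝ) : ℂ) - (t : ℂ) * ((⟪ξ, v⟫ : ℝ) : ℂ) = ((⟪u, ξ⟫ : ℝ) : ℂ) := by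
      intro u
      have : ⟪u + t • v, ξ⟫ = ⟪u, ξ⟫ + t * ⟪ξ, v⟫ := by
        rw [inner_add_left, real_inner_smul_left, real_inner_comm v ξ]
      rw [this]; push_cast; ring
    calc (∫ u : EuclideanSpace ℝ (Fin n),
            f (u + t • v) * h t * Complex.exp (-(Complex.I * ((⟪u, ξ⟫ : ℝ) : ℂ))))
        = ∫ u : EuclideanSpace ℝ (Fin n),
            f (u + t • v) * h t *
              Complex.exp (-(Complex.I * (((⟪u + t • v, ξ⟫ : ℝ) : ℂ) - (t : ℂ) * ((⟪ξ, v⟫ : ℝ) : ℂ)))) := by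
          congr 1; funext u; rw [h1 u]
      _ = ∫ u : EuclideanSpace ℝ (Fin n),
            f u * h t * Complex.exp (-(Complex.I * (((⟪u, ξ⟫ : ℝ) : ℂ) - (t : ℂ) * ((⟪ξ, v⟫ : ℝ) : ℂ)))) := htr
      _ = ∫ u : EuclideanSpace ℝ (Fin n),
            (f u * Complex.exp (-(Complex.I * ((⟪u, ξ⟫ : ℝ) : ℂ)))) *
              (h t * Complex.exp (Complex.I * (t : ℂ) * ((⟪ξ, v⟫ : ℝ) : ℂ))) := by
          congr 1; funext u
          rw [show -(Complex.I * (((⟪u, ξ⟫ : ℝ) : ℂ) - (t : ℂ) * ((⟪ξ, v⟫ : ℝ) : ℂ)))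
              = -(Complex.I * ((⟪u, ξ⟫ : ℝ) : ℂ)) + Complex.I * (t : ℂ) * ((⟪ξ, v⟫ : ℝ) : ℂ) by ring,
            Complex.exp_add]
          ring
      _ = _ := by rw [integral_mul_const]
  have lhs_eq : ftn (fun u => windowedRay h f u v) ξ =
      ∫ t : ℝ, ∫ u : EuclideanSpace ℝ (Fin n),
        f (u + t • v) * h t * Complex.exp (-(Complex.I * ((⟪u, ξ⟫ : ℝ) : ℂ))) := by
    rw [ftn]
    rw [show (∫ u : EuclideanSpace ℝ (Fin n),
        windowedRay h f u v * Complex.exp (-(Complex.I * ((⟪u, ξ⟫ : ℝ) : ℂ)))) =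
        ∫ u : EuclideanSpace ℝ (Fin n), ∫ t : ℝ,
          f (u + t • v) * h t * Complex.exp (-(Complex.I * ((⟪u, ξ⟫ : ℝ) : ℂ))) from by
      congr 1; funext u; rw [windowedRay, ← integral_mul_const]]
    exact integral_integral_swap hint
  rw [lhs_eq]
  simp_rw [key]
  rw [integral_const_mul, ftn, ft1]
  congr 1
  congr 1
  funext t
  congr 1
  push_cast
  ring
end

section
/- Let f ∈ 𝒮(ℝⁿ), h ∈ 𝒮(ℝ), θ ∈ S^{n−1}, σ ∈ ℝ, r > 0. Then the n-dimensional Fourier transform of u ↦ P_h f(u, rθ) evaluated at σθ satisfies (P_h f)^(σθ, rθ) = f̂(σθ) · ĥ(−rσ). -/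
open MeasureTheory Real Complex SchwartzMap
open scoped RealInnerProductSpace

lemma norm_exp_neg_I_mul_real (x : ℝ) : ‖Complex.exp (-(Complex.I * (x : ℝ)))‖ = 1 := by
  simp [Complex.norm_exp]

lemma fourier_slice_aux {n : ℕ} (f : SchwartzMap (EuclideanSpace ℝ (Fin n)) ℂ)
    (h : SchwartzMap ℝ ℂ) (ξ v : EuclideanSpace ℝ (Fin n)) (c : ℝ)
    (hinner : ∀ t : ℝ, ⟪(t • v : EuclideanSpace ℝ (Fin n)), ξ⟫ = t * c) :
    (∫ u : EuclideanSpace ℝ (Fin n),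
        (∫ t : ℝ, f (u + t • v) * h t) * Complex.exp (-(Complex.I * (⟪u, ξ⟫ : ℝ))))
      = (∫ x : EuclideanSpace ℝ (Fin n), f x * Complex.exp (-(Complex.I * (⟪x, ξ⟫ : ℝ))))
        * ∫ t : ℝ, h t * Complex.exp (Complex.I * t * c) := by
  have hic : Continuous fun u : EuclideanSpace ℝ (Fin n) => (⟪u, ξ⟫ : ℝ) :=
    continuous_id.inner continuous_const
  have hecont : Continuous fun u : EuclideanSpace ℝ (Fin n) =>
      Complex.exp (-(Complex.I * (⟪u, ξ⟫ : ℝ))) :=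
    Complex.continuous_exp.comp (continuous_const.mul (Complex.continuous_ofReal.comp hic)).neg
  have hFcont : Continuous fun p : EuclideanSpace ℝ (Fin n) × ℝ =>
      f (p.1 + p.2 • v) * h p.2 * Complex.exp (-(Complex.I * (⟪p.1, ξ⟫ : ℝ))) :=
    ((f.continuous.comp (continuous_fst.add (continuous_snd.smul continuous_const))).mul
      (h.continuous.comp continuous_snd)).mul (hecont.comp continuous_fst)
  have hFint : Integrable (fun p : EuclideanSpace ℝ (Fin n) × ℝ =>
      f (p.1 + p.2 • v) * h p.2 * Complex.exp (-(Complex.I * (⟪p.1, ξ⟫ : ℝ))))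
      (volume.prod volume) := by
    rw [integrable_prod_iff' hFcont.aestronglyMeasurable]
    constructor
    · refine Filter.Eventually.of_forall fun t => ?_
      have h1 : Integrable (fun u : EuclideanSpace ℝ (Fin n) => f (u + t • v)) volume :=
        f.integrable.comp_add_right (t • v)
      have h2 : Integrable (fun u : EuclideanSpace ℝ (Fin n) =>
          (h t * Complex.exp (-(Complex.I * (⟪u, ξ⟫ : ℝ)))) * f (u + t • v)) volume := by
        refine h1.bdd_mul (c := ‖h t‖) ?_ (Filter.Eventually.of_forall fun u => ?_)
        · exact (continuous_const.mul hecont).aestronglyMeasurable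
        · rw [norm_mul, norm_exp_neg_I_mul_real, mul_one]
      exact h2.congr (Filter.Eventually.of_forall fun u => by ring)
    · have heq : ∀ t : ℝ,
          (∫ u : EuclideanSpace ℝ (Fin n),
              ‖f (u + t • v) * h t * Complex.exp (-(Complex.I * (⟪u, ξ⟫ : ℝ)))‖)
            = (∫ x : EuclideanSpace ℝ (Fin n), ‖f x‖) * ‖h t‖ := by
        intro t
        have hptw : ∀ u : EuclideanSpace ℝ (Fin n),
            ‖f (u + t • v) * h t * Complex.exp (-(Complex.I * (⟪u, ξ⟫ : ℝ)))‖
              = ‖f (u + t • v)‖ * ‖h t‖ := by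
          intro u
          rw [norm_mul, norm_mul, norm_exp_neg_I_mul_real, mul_one]
        simp_rw [hptw]
        rw [integral_mul_const]
        congr 1
        exact integral_add_right_eq_self (fun x : EuclideanSpace ℝ (Fin n) => ‖f x‖) (t • v)
      have hmain : Integrable
          (fun t : ℝ => (∫ x : EuclideanSpace ℝ (Fin n), ‖f x‖) * ‖h t‖) volume :=
        (h.integrable.norm).const_mul _
      exact hmain.congr (Filter.Eventually.of_forall fun t => (heq t).symm)
  have lhs_eq : (∫ u : EuclideanSpace ℝ (Fin n),
        (∫ t : ℝ, f (u + t • v) * h t) * Complex.exp (-(Complex.I * (⟪u, ξ⟫ : ℝ))))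
      = ∫ u : EuclideanSpace ℝ (Fin n), ∫ t : ℝ,
          f (u + t • v) * h t * Complex.exp (-(Complex.I * (⟪u, ξ⟫ : ℝ))) := by
    congr 1
    ext u
    rw [← integral_mul_const]
  rw [lhs_eq, integral_integral_swap hFint]
  have inner_eq : ∀ t : ℝ, (∫ u : EuclideanSpace ℝ (Fin n),
        f (u + t • v) * h t * Complex.exp (-(Complex.I * (⟪u, ξ⟫ : ℝ))))
      = (∫ x : EuclideanSpace ℝ (Fin n), f x * Complex.exp (-(Complex.I * (⟪x, ξ⟫ : ℝ))))
        * (h t * Complex.exp (Complex.I * t * c)) := by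
    intro t
    have key : ∀ u : EuclideanSpace ℝ (Fin n),
        f (u + t • v) * h t * Complex.exp (-(Complex.I * (⟪u, ξ⟫ : ℝ)))
          = (fun x : EuclideanSpace ℝ (Fin n) =>
              f x * Complex.exp (-(Complex.I * (⟪x, ξ⟫ : ℝ)))
                * (h t * Complex.exp (Complex.I * t * c))) (u + t • v) := by
      intro u
      have hee : Complex.exp (-(Complex.I * (⟪u, ξ⟫ : ℝ)))
          = Complex.exp (-(Complex.I * (⟪u + t • v, ξ⟫ : ℝ)))
            * Complex.exp (Complex.I * t * c) := by
        rw [← Complex.exp_add]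
        congr 1
        rw [inner_add_left, hinner]
        push_cast
        ring
      rw [hee]
      ring
    simp_rw [key]
    rw [integral_add_right_eq_self (fun x : EuclideanSpace ℝ (Fin n) =>
      f x * Complex.exp (-(Complex.I * (⟪x, ξ⟫ : ℝ)))
        * (h t * Complex.exp (Complex.I * t * c))) (t • v)]
    rw [integral_mul_const]
  simp_rw [inner_eq]
  rw [integral_const_mul]

theorem stmt5 {n : ℕ} (f : SchwartzMap (EuclideanSpace ℝ (Fin n)) ℂ) (h : SchwartzMap ℝ ℂ)
    (θ : EuclideanSpace ℝ (Fin n)) (hθ : ‖θ‖ = 1) (σ r : ℝ) (hr : 0 < r) :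
    ftn (fun u => windowedRay h f u (r • θ)) (σ • θ)
      = ftn f (σ • θ) * ft1 h (-(r * σ)) := by
  have hinner : ∀ t : ℝ, ⟪(t • (r • θ) : EuclideanSpace ℝ (Fin n)), σ • θ⟫ = t * (r * σ) := by
    intro t
    rw [real_inner_smul_left, real_inner_smul_left, real_inner_smul_right,
      real_inner_self_eq_norm_sq, hθ]
    ring
  have := fourier_slice_aux f h (σ • θ) (r • θ) (r * σ) hinner
  simp only [ftn, windowedRay, ft1]
  rw [this]
  congr 1
  congr 1
  ext t
  congr 1
  push_cast
  ring
end

section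
/- Let h ∈ 𝒮(ℝ) be nonzero and real-valued, f ∈ 𝒮(ℝⁿ), θ ∈ S^{n−1}, σ ≠ 0. Then ∫_0^∞ (P_h f)^(σθ, rθ) ĥ(rσ) dr = f̂(σθ) |σ|^{−1} ∫_0^∞ |ĥ(r)|² dr, where (P_h f)^ is the Fourier transform of P_h f in its first variable. -/
open MeasureTheory Real Complex SchwartzMap
open scoped RealInnerProductSpace

lemma key_integrable {n : ℕ} (h : SchwartzMap ℝ ℂ)
    (f : SchwartzMap (EuclideanSpace ℝ (Fin n)) ℂ)
    (v ξ : EuclideanSpace ℝ (Fin n)) :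
    Integrable (fun p : (EuclideanSpace ℝ (Fin n)) × ℝ =>
      f (p.1 + p.2 • v) * h p.2 * Complex.exp (-(Complex.I * (⟪p.1, ξ⟫ : ℝ)))) := by
  have hcont : Continuous (fun p : (EuclideanSpace ℝ (Fin n)) × ℝ =>
      f (p.1 + p.2 • v) * h p.2 * Complex.exp (-(Complex.I * (⟪p.1, ξ⟫ : ℝ)))) := by
    refine ((f.continuous.comp (by fun_prop)).mul (h.continuous.comp continuous_snd)).mul ?_
    have cinner : Continuous fun p : (EuclideanSpace ℝ (Fin n)) × ℝ => ((⟪p.1, ξ⟫ : ℝ) : ℂ) :=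
      Complex.continuous_ofReal.comp (continuous_fst.inner continuous_const)
    exact Complex.continuous_exp.comp ((continuous_const.mul cinner).neg)
  rw [Measure.volume_eq_prod, integrable_prod_iff' (by rw [← Measure.volume_eq_prod]; exact hcont.aestronglyMeasurable)]
  constructor
  · refine Filter.Eventually.of_forall fun t => ?_
    have h1 : Integrable (fun u : EuclideanSpace ℝ (Fin n) => f (u + t • v)) := by
      simpa using (f.integrable.comp_add_right (t • v))
    have hc : Continuous fun u : EuclideanSpace ℝ (Fin n) =>
        Complex.exp (-(Complex.I * ((⟪u, ξ⟫ : ℝ) : ℂ))) := by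
      refine Complex.continuous_exp.comp ((continuous_const.mul ?_).neg)
      exact Complex.continuous_ofReal.comp (continuous_id.inner continuous_const)
    have h2 := (h1.mul_const (h t)).bdd_mul hc.aestronglyMeasurable (c := 1)
      (Filter.Eventually.of_forall fun u => le_of_eq (by simp [Complex.norm_exp]))
    exact h2.congr (Filter.Eventually.of_forall fun u => by ring)
  · have : ∀ t : ℝ, (∫ u : EuclideanSpace ℝ (Fin n),
        ‖f (u + t • v) * h t * Complex.exp (-(Complex.I * (⟪u, ξ⟫ : ℝ)))‖)
        = (∫ u : EuclideanSpace ℝ (Fin n), ‖f u‖) * ‖h t‖ := by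
      intro t
      have : ∀ u : EuclideanSpace ℝ (Fin n),
          ‖f (u + t • v) * h t * Complex.exp (-(Complex.I * (⟪u, ξ⟫ : ℝ)))‖
          = ‖f (u + t • v)‖ * ‖h t‖ := by
        intro u
        simp [Complex.norm_exp]
      simp_rw [this]
      rw [integral_mul_const]
      congr 1
      exact integral_add_right_eq_self (fun u => ‖f u‖) (t • v)
    simp_rw [this]
    exact (h.integrable.norm).const_mul _

lemma ftn_windowedRay {n : ℕ} (h : SchwartzMap ℝ ℂ)
    (f : SchwartzMap (EuclideanSpace ℝ (Fin n)) ℂ)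
    (v ξ : EuclideanSpace ℝ (Fin n)) :
    ftn (fun u => windowedRay h f u v) ξ = ftn f ξ * ft1 h (-⟪v, ξ⟫) := by
  unfold ftn windowedRay ft1
  have step1 : ∀ u : EuclideanSpace ℝ (Fin n),
      (∫ t : ℝ, f (u + t • v) * h t) * Complex.exp (-(Complex.I * (⟪u, ξ⟫ : ℝ)))
      = ∫ t : ℝ, f (u + t • v) * h t * Complex.exp (-(Complex.I * (⟪u, ξ⟫ : ℝ))) := by
    intro u; rw [integral_mul_const]
  simp_rw [step1]
  rw [integral_integral_swap (by rw [← Measure.volume_eq_prod]; exact key_integrable h f v ξ)]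
  have step2 : ∀ t : ℝ,
      (∫ u : EuclideanSpace ℝ (Fin n),
        f (u + t • v) * h t * Complex.exp (-(Complex.I * (⟪u, ξ⟫ : ℝ))))
      = (∫ x : EuclideanSpace ℝ (Fin n), f x * Complex.exp (-(Complex.I * (⟪x, ξ⟫ : ℝ))))
          * (h t * Complex.exp (-(Complex.I * (t : ℂ) * (-⟪v, ξ⟫ : ℝ)))) := by
    intro t
    have expand : ∀ u : EuclideanSpace ℝ (Fin n),
        f (u + t • v) * h t * Complex.exp (-(Complex.I * (⟪u, ξ⟫ : ℝ)))
        = (f (u + t • v) * Complex.exp (-(Complex.I * (⟪u + t • v, ξ⟫ : ℝ))))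
            * (h t * Complex.exp (-(Complex.I * (t : ℂ) * (-⟪v, ξ⟫ : ℝ)))) := by
      intro u
      have hip : (⟪u + t • v, ξ⟫ : ℝ) = ⟪u, ξ⟫ + t * ⟪v, ξ⟫ := by
        rw [inner_add_left, real_inner_smul_left]
      have hexp : Complex.exp (-(Complex.I * (⟪u, ξ⟫ : ℝ)))
          = Complex.exp (-(Complex.I * (⟪u + t • v, ξ⟫ : ℝ)))
            * Complex.exp (-(Complex.I * (t : ℂ) * (-⟪v, ξ⟫ : ℝ))) := by
        rw [← Complex.exp_add]
        congr 1
        rw [hip]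
        push_cast
        ring
      rw [hexp]
      ring
    simp_rw [expand]
    rw [integral_mul_const]
    congr 1
    exact integral_add_right_eq_self
      (fun x => f x * Complex.exp (-(Complex.I * (⟪x, ξ⟫ : ℝ)))) (t • v)
  simp_rw [step2]
  rw [integral_const_mul]

lemma ft1_neg_eq_conj (h : SchwartzMap ℝ ℂ) (hreal : ∀ t : ℝ, (h t).im = 0) (s : ℝ) :
    ft1 h (-s) = (starRingEnd ℂ) (ft1 h s) := by
  unfold ft1
  rw [← integral_conj]
  congr 1
  ext t
  rw [map_mul, ← Complex.exp_conj]
  have h1 : (starRingEnd ℂ) (h t) = h t := by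
    rw [Complex.conj_eq_iff_im]; exact hreal t
  rw [h1]
  congr 1
  simp only [map_neg, map_mul, Complex.conj_I, Complex.conj_ofReal]
  push_cast
  ring_nf

lemma ft1_norm_neg (h : SchwartzMap ℝ ℂ) (hreal : ∀ t : ℝ, (h t).im = 0) (s : ℝ) :
    ‖ft1 h (-s)‖ = ‖ft1 h s‖ := by
  rw [ft1_neg_eq_conj h hreal, RCLike.norm_conj]

theorem stmt6 {n : ℕ} (h : SchwartzMap ℝ ℂ) (hh : h ≠ 0) (hreal : ∀ t : ℝ, (h t).im = 0)
    (f : SchwartzMap (EuclideanSpace ℝ (Fin n)) ℂ)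
    (θ : EuclideanSpace ℝ (Fin n)) (hθ : ‖θ‖ = 1) (σ : ℝ) (hσ : σ ≠ 0) :
    (∫ r in Set.Ioi (0 : ℝ), ftn (fun u => windowedRay h f u (r • θ)) (σ • θ) * ft1 h (r * σ))
      = ftn f (σ • θ) * ((|σ|⁻¹ : ℝ) : ℂ) *
          ((∫ r in Set.Ioi (0 : ℝ), ‖ft1 h r‖ ^ 2 : ℝ) : ℂ) := by
  have hinner : ∀ r : ℝ, (⟪r • θ, σ • θ⟫ : ℝ) = r * σ := by
    intro r
    rw [real_inner_smul_left, real_inner_smul_right, real_inner_self_eq_norm_sq, hθ]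
    ring
  have key : ∀ r : ℝ, ftn (fun u => windowedRay h f u (r • θ)) (σ • θ) * ft1 h (r * σ)
      = ftn f (σ • θ) * ((‖ft1 h (r * σ)‖ ^ 2 : ℝ) : ℂ) := by
    intro r
    rw [ftn_windowedRay, hinner r, mul_assoc]
    congr 1
    rw [ft1_neg_eq_conj h hreal, RCLike.conj_mul]
    norm_cast
  simp_rw [key]
  rw [integral_const_mul]
  rw [show (∫ r in Set.Ioi (0:ℝ), ((‖ft1 h (r * σ)‖ ^ 2 : ℝ) : ℂ))
      = ((∫ r in Set.Ioi (0:ℝ), ‖ft1 h (r * σ)‖ ^ 2 : ℝ) : ℂ) from integral_ofReal]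
  have sub : (∫ r in Set.Ioi (0 : ℝ), ‖ft1 h (r * σ)‖ ^ 2)
      = |σ|⁻¹ * ∫ r in Set.Ioi (0 : ℝ), ‖ft1 h r‖ ^ 2 := by
    have habs : ∀ r : ℝ, 0 < r → ‖ft1 h (r * σ)‖ ^ 2 = ‖ft1 h (r * |σ|)‖ ^ 2 := by
      intro r _
      rcases abs_choice σ with hc | hc
      · rw [hc]
      · rw [hc, mul_neg, ft1_norm_neg h hreal]
    rw [setIntegral_congr_fun measurableSet_Ioi (fun r hr => habs r hr)]
    have := integral_comp_mul_right_Ioi (fun s => ‖ft1 h s‖ ^ 2) 0 (abs_pos.mpr hσ)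
    simpa [smul_eq_mul] using this
  rw [sub]
  push_cast
  ring_nf
end

section
/- Let f ∈ 𝒮(ℝⁿ), h ∈ 𝒮(ℝ), θ ∈ S^{n−1}, r > 0, σ ∈ ℝ. Then r · ∫_{θ^⊥} ∫_ℝ P_h f(u + τ rθ, rθ) e^{−iστ} dτ du = f̂(σ/r · θ) · ĥ(−σ), where the outer integral is over the hyperplane θ^⊥ with its (n−1)-dimensional Lebesgue measure and f̂ is the n-dimensional Fourier transform of f. -/
open MeasureTheory Real Complex SchwartzMap
open scoped RealInnerProductSpace

section Aux

lemma norm_exp_real_mul_I' (c : ℝ) {z : ℂ} (hz : z = (c : ℂ) * Complex.I) :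
    ‖Complex.exp z‖ = 1 := by
  rw [hz]
  exact Complex.norm_exp_ofReal_mul_I c

lemma line_hasTemperateGrowth {E : Type*} [NormedAddCommGroup E] [NormedSpace ℝ E] (u v : E) :
    Function.HasTemperateGrowth (fun t : ℝ => u + t • v) := by
  have hderiv : ∀ t : ℝ, HasFDerivAt (fun t : ℝ => u + t • v)
      ((1 : ℝ →L[ℝ] ℝ).smulRight v) t := by
    intro t
    have h := (((hasDerivAt_id t).smul_const v).const_add u).hasFDerivAt
    exact h.congr_fderiv (by ext; simp)
  refine Function.HasTemperateGrowth.of_fderiv ?_ (fun t => (hderiv t).differentiableAt)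
      (k := 1) (C := ‖u‖ + ‖v‖) (fun t => ?_)
  · have heq : (fderiv ℝ fun t : ℝ => u + t • v) = fun _ => (1 : ℝ →L[ℝ] ℝ).smulRight v := by
      funext t; exact (hderiv t).fderiv
    rw [heq]
    exact Function.HasTemperateGrowth.const _
  · have h1 : ‖u + t • v‖ ≤ ‖u‖ + ‖t‖ * ‖v‖ := by
      refine (norm_add_le _ _).trans ?_
      rw [norm_smul]
    simp only [pow_one]
    nlinarith [norm_nonneg u, norm_nonneg v, norm_nonneg t]

lemma exists_line_schwartz {E : Type*} [NormedAddCommGroup E] [InnerProductSpace ℝ E]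
    (f : SchwartzMap E ℂ) (u v : E) (hv : v ≠ 0) :
    ∃ g : SchwartzMap ℝ ℂ, ∀ t : ℝ, g t = f (u + t • v) := by
  have hg : Function.HasTemperateGrowth (fun t : ℝ => u + t • v) :=
    line_hasTemperateGrowth u v
  have hupper : ∃ (k : ℕ) (C : ℝ), ∀ t : ℝ, ‖t‖ ≤ C * (1 + ‖u + t • v‖) ^ k := by
    refine ⟨1, (1 + ‖u‖) / ‖v‖, fun t => ?_⟩
    have hv' : (0 : ℝ) < ‖v‖ := norm_pos_iff.mpr hv
    rw [pow_one, div_mul_eq_mul_div, le_div_iff₀ hv']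
    have h1 : ‖t‖ * ‖v‖ = ‖t • v‖ := (norm_smul t v).symm
    have h2 : ‖t • v‖ ≤ ‖u + t • v‖ + ‖u‖ := by
      have h3 := norm_sub_le (u + t • v) u
      simpa using h3
    nlinarith [norm_nonneg (u + t • v), norm_nonneg u]
  exact ⟨SchwartzMap.compCLM ℝ hg hupper f, fun t => rfl⟩

lemma exists_measurePreserving_perp {E : Type*} [NormedAddCommGroup E] [InnerProductSpace ℝ E]
    [FiniteDimensional ℝ E] [MeasurableSpace E] [BorelSpace E]
    (θ : E) (hθ : ‖θ‖ = 1) :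
    ∃ Ψ : (((ℝ ∙ θ)ᗮ : Submodule ℝ E) × ℝ) ≃ᵐ E,
      MeasurePreserving Ψ ((volume : Measure ((ℝ ∙ θ)ᗮ : Submodule ℝ E)).prod volume) volume ∧
      ∀ p : (((ℝ ∙ θ)ᗮ : Submodule ℝ E) × ℝ), Ψ p = (p.1 : E) + p.2 • θ := by
  classical
  set K : Submodule ℝ E := ℝ ∙ θ with hK
  let b₀ := stdOrthonormalBasis ℝ (↥Kᗮ)
  set ι := Fin (Module.finrank ℝ (↥Kᗮ)) with hι
  let v : ι ⊕ Unit → E := Sum.elim (fun i => (b₀ i : E)) (fun _ => θ)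
  have hθK : θ ∈ K := Submodule.mem_span_singleton_self θ
  have hinner : ∀ (i : ι), ⟪θ, (b₀ i : E)⟫ = 0 := fun i =>
    Submodule.inner_right_of_mem_orthogonal hθK (b₀ i).2
  have hon : Orthonormal ℝ v := by
    rw [orthonormal_iff_ite]
    have hb := b₀.orthonormal
    rw [orthonormal_iff_ite] at hb
    rintro (i | i) (j | j)
    · have hco : (⟪v (Sum.inl i), v (Sum.inl j)⟫ : ℝ) = ⟪b₀ i, b₀ j⟫ := rfl
      rw [hco, hb i j]
      simp
    · simp only [v, Sum.elim_inl, Sum.elim_inr]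
      rw [if_neg (by simp), real_inner_comm]
      exact hinner i
    · simp only [v, Sum.elim_inl, Sum.elim_inr]
      rw [if_neg (by simp)]
      exact hinner j
    · simp [v, real_inner_self_eq_norm_mul_norm, hθ]
  have hsp : ⊤ ≤ Submodule.span ℝ (Set.range v) := by
    have hrange : Set.range v = Set.range (fun i : ι => (b₀ i : E)) ∪ Set.range
        (fun _ : Unit => θ) := Set.Sum.elim_range _ _
    rw [hrange, Submodule.span_union]
    have h1 : Submodule.span ℝ (Set.range (fun i : ι => (b₀ i : E))) = Kᗮ := by
      have himg : Set.range (fun i : ι => (b₀ i : E)) = (Kᗮ).subtype '' (Set.range b₀) := by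
        rw [← Set.range_comp]; rfl
      rw [himg, Submodule.span_image]
      rw [show Submodule.span ℝ (Set.range ⇑b₀) = ⊤ by
        rw [← b₀.coe_toBasis]; exact b₀.toBasis.span_eq]
      rw [Submodule.map_top, Submodule.range_subtype]
    have h2 : Submodule.span ℝ (Set.range (fun _ : Unit => θ)) = K := by
      rw [Set.range_const]
    rw [h1, h2, sup_comm, Submodule.sup_orthogonal_of_hasOrthogonalProjection]
  let B : OrthonormalBasis (ι ⊕ Unit) ℝ E := OrthonormalBasis.mk hon hsp
  let e₁ : ((↥Kᗮ) × ℝ) ≃ᵐ (EuclideanSpace ℝ ι × ℝ) :=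
    (b₀.measurableEquiv).prodCongr (MeasurableEquiv.refl ℝ)
  let e₂ : (EuclideanSpace ℝ ι × ℝ) ≃ᵐ ((ι → ℝ) × (Unit → ℝ)) :=
    (MeasurableEquiv.toLp 2 (ι → ℝ)).symm.prodCongr (MeasurableEquiv.funUnique Unit ℝ).symm
  let e₃ : ((ι → ℝ) × (Unit → ℝ)) ≃ᵐ ((ι ⊕ Unit) → ℝ) :=
    (MeasurableEquiv.sumPiEquivProdPi (fun _ => ℝ)).symm
  let e₄ : ((ι ⊕ Unit) → ℝ) ≃ᵐ EuclideanSpace ℝ (ι ⊕ Unit) :=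
    (MeasurableEquiv.toLp 2 ((ι ⊕ Unit) → ℝ))
  let e₅ : EuclideanSpace ℝ (ι ⊕ Unit) ≃ᵐ E := B.measurableEquiv.symm
  refine ⟨e₁.trans (e₂.trans (e₃.trans (e₄.trans e₅))), ?_, ?_⟩
  · have m₁ : MeasurePreserving e₁ ((volume : Measure ↥Kᗮ).prod volume)
        ((volume : Measure (EuclideanSpace ℝ ι)).prod volume) :=
      (b₀.measurePreserving_measurableEquiv).prod (MeasurePreserving.id _)
    have m₂ : MeasurePreserving e₂ ((volume : Measure (EuclideanSpace ℝ ι)).prod volume)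
        ((volume : Measure (ι → ℝ)).prod volume) :=
      (EuclideanSpace.volume_preserving_symm_measurableEquiv_toLp ι).prod
        ((volume_preserving_funUnique Unit ℝ).symm _)
    have m₃ : MeasurePreserving e₃ ((volume : Measure (ι → ℝ)).prod volume) volume :=
      volume_measurePreserving_sumPiEquivProdPi_symm _
    have m₄ : MeasurePreserving e₄ volume volume :=
      (EuclideanSpace.volume_preserving_symm_measurableEquiv_toLp (ι ⊕ Unit)).symm
    have m₅ : MeasurePreserving e₅ volume volume :=
      B.measurePreserving_measurableEquiv.symm
    exact (((m₅.comp m₄).comp m₃).comp m₂).comp m₁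
  · rintro ⟨u, s⟩
    have hR : ∀ j : ι ⊕ Unit, (e₄ (e₃ (e₂ (e₁ (u, s))))) j =
        Sum.elim (fun i => b₀.repr u i) (fun _ => s) j := by
      rintro (i | t) <;> rfl
    have hrepr : B.repr ((u : E) + s • θ) = e₄ (e₃ (e₂ (e₁ (u, s)))) := by
      refine PiLp.ext fun j => ?_
      rw [hR j, B.repr_apply_apply]
      have hB : ⇑B = v := OrthonormalBasis.coe_mk hon hsp
      rcases j with i | t
      · have hBi : B (Sum.inl i) = (b₀ i : E) := by rw [hB]; rfl
        rw [hBi]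
        have h1 : ⟪(b₀ i : E), (u : E) + s • θ⟫ = ⟪(b₀ i : E), (u : E)⟫ +
            s * ⟪(b₀ i : E), θ⟫ := by
          rw [inner_add_right, real_inner_smul_right]
        have h2 : ⟪(b₀ i : E), θ⟫ = 0 := by rw [real_inner_comm]; exact hinner i
        have h3 : ⟪(b₀ i : E), (u : E)⟫ = b₀.repr u i := by
          rw [b₀.repr_apply_apply]
          rfl
        rw [h1, h2, h3]
        simp
      · have hBt : B (Sum.inr t) = θ := by rw [hB]; rfl
        rw [hBt]
        have h1 : ⟪θ, (u : E) + s • θ⟫ = ⟪θ, (u : E)⟫ + s * ⟪θ, θ⟫ := by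
          rw [inner_add_right, real_inner_smul_right]
        have h2 : ⟪θ, (u : E)⟫ = 0 :=
          Submodule.inner_right_of_mem_orthogonal hθK u.2
        have h3 : ⟪θ, θ⟫ = 1 := by
          rw [real_inner_self_eq_norm_mul_norm, hθ, one_mul]
        rw [h1, h2, h3]
        simp
    have hfinal : (e₁.trans (e₂.trans (e₃.trans (e₄.trans e₅)))) (u, s) =
        B.repr.symm (e₄ (e₃ (e₂ (e₁ (u, s))))) := rfl
    rw [hfinal, ← hrepr, B.repr.symm_apply_apply]

end Aux

theorem stmt17 {n : ℕ} (f : SchwartzMap (EuclideanSpace ℝ (Fin n)) ℂ) (h : SchwartzMap ℝ ℂ)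
    (θ : EuclideanSpace ℝ (Fin n)) (hθ : ‖θ‖ = 1) (r σ : ℝ) (hr : 0 < r) :
    (r : ℂ) * ∫ u : (ℝ ∙ θ)ᗮ, ∫ τ : ℝ,
        windowedRay h f ((u : EuclideanSpace ℝ (Fin n)) + τ • (r • θ)) (r • θ) *
          Complex.exp (-(Complex.I * σ * τ))
      = ftn f ((σ / r) • θ) * ft1 h (-σ) := by
  have hrne : r ≠ 0 := ne_of_gt hr
  have hrne' : (r : ℂ) ≠ 0 := by exact_mod_cast hrne
  have hθ0 : θ ≠ 0 := by
    intro h0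
    rw [h0, norm_zero] at hθ
    exact one_ne_zero hθ.symm
  have hv0 : r • θ ≠ 0 := smul_ne_zero hrne hθ0
  set ξ : EuclideanSpace ℝ (Fin n) := (σ / r) • θ with hξ
  set W : EuclideanSpace ℝ (Fin n) → ℂ :=
    fun x => f x * Complex.exp (-(Complex.I * (⟪x, ξ⟫ : ℝ))) with hW
  -- Step 0 : simplify the inner integral for a fixed u
  have step0 : ∀ u : (ℝ ∙ θ)ᗮ,
      (∫ τ : ℝ, windowedRay (⇑h) (⇑f) ((u : EuclideanSpace ℝ (Fin n)) + τ • (r • θ)) (r • θ) *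
          Complex.exp (-(Complex.I * σ * τ)))
        = ft1 (⇑h) (-σ) * ∫ t : ℝ, f ((u : EuclideanSpace ℝ (Fin n)) + t • (r • θ)) *
            Complex.exp (-(Complex.I * σ * t)) := by
    intro u
    obtain ⟨g, hg⟩ := exists_line_schwartz f (u : EuclideanSpace ℝ (Fin n)) (r • θ) hv0
    -- rewriting the windowed ray transform
    have hA : ∀ τ : ℝ, windowedRay (⇑h) (⇑f) ((u : EuclideanSpace ℝ (Fin n)) + τ • (r • θ)) (r • θ)
        = ∫ t : ℝ, g t * h (t - τ) := by
      intro τ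
      unfold windowedRay
      have hshift := integral_add_right_eq_self (μ := volume) (fun t : ℝ => g t * h (t - τ)) τ
      rw [← hshift]
      refine integral_congr_ae (Filter.Eventually.of_forall fun t => ?_) <;> beta_reduce
      have harg : (u : EuclideanSpace ℝ (Fin n)) + τ • (r • θ) + t • (r • θ)
          = (u : EuclideanSpace ℝ (Fin n)) + (t + τ) • (r • θ) := by
        rw [add_smul]; abel
      rw [harg, ← hg (t + τ), add_sub_cancel_right]
    -- integrabilities
    have hG₁ : Integrable (fun t : ℝ => g t * Complex.exp (-(Complex.I * σ * t))) := by
      have hb : ∃ C, ∀ t : ℝ, ‖Complex.exp (-(Complex.I * σ * t))‖ ≤ C := by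
        refine ⟨1, fun t => ?_⟩
        rw [norm_exp_real_mul_I' (-(σ * t)) (by push_cast; ring)]
      have hm : AEStronglyMeasurable (fun t : ℝ => Complex.exp (-(Complex.I * σ * t)))
          (volume : Measure ℝ) :=
        (Complex.continuous_exp.comp
          (by fun_prop : Continuous fun t : ℝ => -(Complex.I * σ * t))).aestronglyMeasurable
      exact (g.integrable.bdd_mul hm (Filter.Eventually.of_forall hb.choose_spec)).congr
        (Filter.Eventually.of_forall fun t => mul_comm _ _)
    have hG₂ : Integrable (fun w : ℝ => h w * Complex.exp (Complex.I * σ * w)) := by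
      have hb : ∃ C, ∀ t : ℝ, ‖Complex.exp (Complex.I * σ * t)‖ ≤ C := by
        refine ⟨1, fun t => ?_⟩
        rw [norm_exp_real_mul_I' (σ * t) (by push_cast; ring)]
      have hm : AEStronglyMeasurable (fun t : ℝ => Complex.exp (Complex.I * σ * t))
          (volume : Measure ℝ) :=
        (Complex.continuous_exp.comp
          (by fun_prop : Continuous fun t : ℝ => Complex.I * σ * t)).aestronglyMeasurable
      exact (h.integrable.bdd_mul hm (Filter.Eventually.of_forall hb.choose_spec)).congr
        (Filter.Eventually.of_forall fun t => mul_comm _ _)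
    have hψ : MeasurePreserving (fun z : ℝ × ℝ => (z.2 - z.1, z.2))
        ((volume : Measure ℝ).prod volume) ((volume : Measure ℝ).prod volume) := by
      have h1 := (measurePreserving_prod_add (volume : Measure ℝ) volume).comp
        ((measurePreserving_sub_prod (volume : Measure ℝ) volume).comp
          (Measure.measurePreserving_swap (μ := (volume : Measure ℝ)) (ν := volume)))
      have heq : ((fun z : ℝ × ℝ => (z.1, z.1 + z.2)) ∘
          ((fun z : ℝ × ℝ => (z.1 - z.2, z.2)) ∘ Prod.swap))
          = fun z : ℝ × ℝ => (z.2 - z.1, z.2) := by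
        funext z
        simp [Function.comp, sub_add_cancel]
      rwa [heq] at h1
    have hH : Integrable (fun z : ℝ × ℝ =>
        (h z.1 * Complex.exp (Complex.I * σ * z.1)) *
          (g z.2 * Complex.exp (-(Complex.I * σ * z.2))))
        ((volume : Measure ℝ).prod volume) := hG₂.mul_prod hG₁
    have hInt : Integrable (Function.uncurry fun τ t : ℝ =>
        g t * h (t - τ) * Complex.exp (-(Complex.I * σ * τ)))
        ((volume : Measure ℝ).prod volume) := by
      have hcomp := (hψ.integrable_comp hH.aestronglyMeasurable).mpr hH
      refine hcomp.congr (Filter.Eventually.of_forall fun z => ?_)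
      simp only [Function.comp_apply, Function.uncurry]
      have hexp : Complex.exp (Complex.I * σ * ((z.2 - z.1 : ℝ) : ℂ)) *
          Complex.exp (-(Complex.I * σ * z.2)) = Complex.exp (-(Complex.I * σ * z.1)) := by
        rw [← Complex.exp_add]
        congr 1
        push_cast
        ring
      calc h (z.2 - z.1) * Complex.exp (Complex.I * σ * ((z.2 - z.1 : ℝ) : ℂ)) *
            (g z.2 * Complex.exp (-(Complex.I * σ * z.2)))
          = g z.2 * h (z.2 - z.1) * (Complex.exp (Complex.I * σ * ((z.2 - z.1 : ℝ) : ℂ)) *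
            Complex.exp (-(Complex.I * σ * z.2))) := by ring
        _ = g z.2 * h (z.2 - z.1) * Complex.exp (-(Complex.I * σ * z.1)) := by rw [hexp]
    calc (∫ τ : ℝ, windowedRay (⇑h) (⇑f)
            ((u : EuclideanSpace ℝ (Fin n)) + τ • (r • θ)) (r • θ) *
            Complex.exp (-(Complex.I * σ * τ)))
        = ∫ τ : ℝ, (∫ t : ℝ, g t * h (t - τ)) * Complex.exp (-(Complex.I * σ * τ)) := by
          refine integral_congr_ae (Filter.Eventually.of_forall fun τ => ?_) <;> beta_reduce
          rw [hA τ]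
      _ = ∫ τ : ℝ, ∫ t : ℝ, g t * h (t - τ) * Complex.exp (-(Complex.I * σ * τ)) := by
          refine integral_congr_ae (Filter.Eventually.of_forall fun τ => ?_) <;> beta_reduce
          exact (integral_mul_const _ _).symm
      _ = ∫ t : ℝ, ∫ τ : ℝ, g t * h (t - τ) * Complex.exp (-(Complex.I * σ * τ)) :=
          integral_integral_swap hInt
      _ = ∫ t : ℝ, g t * (Complex.exp (-(Complex.I * σ * t)) * ft1 (⇑h) (-σ)) := by
          refine integral_congr_ae (Filter.Eventually.of_forall fun t => ?_) <;> beta_reduce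
          rw [show (fun τ : ℝ => g t * h (t - τ) * Complex.exp (-(Complex.I * σ * τ)))
              = fun τ : ℝ => g t * (h (t - τ) * Complex.exp (-(Complex.I * σ * τ))) from
            funext fun τ => by ring]
          rw [integral_const_mul]
          congr 1
          have hsub := integral_sub_left_eq_self
            (fun w : ℝ => h w * Complex.exp (-(Complex.I * σ * t) + Complex.I * σ * w))
            (volume : Measure ℝ) t
          have hfun : (fun τ : ℝ => h (t - τ) * Complex.exp (-(Complex.I * σ * τ)))
              = fun τ : ℝ => (fun w : ℝ =>
                  h w * Complex.exp (-(Complex.I * σ * t) + Complex.I * σ * w)) (t - τ) := by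
            funext τ
            congr 1
            congr 1
            push_cast
            ring
          rw [hfun, hsub]
          have hfun2 : (fun w : ℝ =>
              h w * Complex.exp (-(Complex.I * σ * t) + Complex.I * σ * w))
              = fun w : ℝ => Complex.exp (-(Complex.I * σ * t)) *
                  (h w * Complex.exp (Complex.I * σ * w)) := by
            funext w
            rw [Complex.exp_add]
            ring
          rw [hfun2, integral_const_mul]
          congr 1
          unfold ft1
          refine integral_congr_ae (Filter.Eventually.of_forall fun w => ?_) <;> beta_reduce
          congr 1
          congr 1
          push_cast
          ring
      _ = ft1 (⇑h) (-σ) * ∫ t : ℝ, f ((u : EuclideanSpace ℝ (Fin n)) + t • (r • θ)) *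
            Complex.exp (-(Complex.I * σ * t)) := by
          rw [← integral_const_mul]
          refine integral_congr_ae (Filter.Eventually.of_forall fun t => ?_) <;> beta_reduce
          rw [hg t]
          ring
  -- Step C : rescale the line integral
  have stepC : ∀ u : (ℝ ∙ θ)ᗮ,
      (∫ t : ℝ, f ((u : EuclideanSpace ℝ (Fin n)) + t • (r • θ)) *
          Complex.exp (-(Complex.I * σ * t)))
        = r⁻¹ • ∫ s : ℝ, f ((u : EuclideanSpace ℝ (Fin n)) + s • θ) *
            Complex.exp (-(Complex.I * ((σ / r : ℝ) : ℂ) * s)) := by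
    intro u
    have hcm := MeasureTheory.Measure.integral_comp_mul_left
      (fun s : ℝ => f ((u : EuclideanSpace ℝ (Fin n)) + s • θ) *
        Complex.exp (-(Complex.I * ((σ / r : ℝ) : ℂ) * s))) r
    rw [show |r⁻¹| = r⁻¹ from abs_of_pos (inv_pos.mpr hr)] at hcm
    rw [← hcm]
    refine integral_congr_ae (Filter.Eventually.of_forall fun t => ?_) <;> beta_reduce
    have harg : (u : EuclideanSpace ℝ (Fin n)) + t • (r • θ)
        = (u : EuclideanSpace ℝ (Fin n)) + (r * t) • θ := by
      rw [smul_smul, mul_comm]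
    rw [harg]
    congr 1
    congr 1
    push_cast
    field_simp
  -- Step D : combine into n-dimensional Fourier transform
  obtain ⟨Ψ, hΨmp, hΨeq⟩ := exists_measurePreserving_perp θ hθ
  have hWint : Integrable W (volume : Measure (EuclideanSpace ℝ (Fin n))) := by
    have hb : ∃ C, ∀ x : EuclideanSpace ℝ (Fin n),
        ‖Complex.exp (-(Complex.I * (⟪x, ξ⟫ : ℝ)))‖ ≤ C := by
      refine ⟨1, fun x => ?_⟩
      rw [norm_exp_real_mul_I' (-(⟪x, ξ⟫ : ℝ)) (by push_cast; ring)]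
    have hm : AEStronglyMeasurable
        (fun x : EuclideanSpace ℝ (Fin n) => Complex.exp (-(Complex.I * (⟪x, ξ⟫ : ℝ))))
        (volume : Measure (EuclideanSpace ℝ (Fin n))) := by
      have hc : Continuous fun x : EuclideanSpace ℝ (Fin n) =>
          Complex.exp (-(Complex.I * (⟪x, ξ⟫ : ℝ))) := by
        have hinner : Continuous fun x : EuclideanSpace ℝ (Fin n) => (⟪x, ξ⟫ : ℝ) :=
          continuous_id.inner continuous_const
        exact Complex.continuous_exp.comp
          ((continuous_const.mul (Complex.continuous_ofReal.comp hinner)).neg)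
      exact hc.aestronglyMeasurable
    exact (f.integrable.bdd_mul hm (Filter.Eventually.of_forall hb.choose_spec)).congr
      (Filter.Eventually.of_forall fun x => mul_comm _ _)
  have hpt : ∀ (u : (ℝ ∙ θ)ᗮ) (s : ℝ),
      f ((u : EuclideanSpace ℝ (Fin n)) + s • θ) *
        Complex.exp (-(Complex.I * ((σ / r : ℝ) : ℂ) * s)) = W (Ψ (u, s)) := by
    intro u s
    rw [hW, hΨeq (u, s)]
    have hip : (⟪(u : EuclideanSpace ℝ (Fin n)) + s • θ, ξ⟫ : ℝ) = (σ / r) * s := by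
      rw [hξ, real_inner_smul_right, inner_add_left, real_inner_smul_left]
      have h2 : ⟪θ, (u : EuclideanSpace ℝ (Fin n))⟫ = 0 :=
        Submodule.inner_right_of_mem_orthogonal (Submodule.mem_span_singleton_self θ) u.2
      have h2' : ⟪(u : EuclideanSpace ℝ (Fin n)), θ⟫ = (0 : ℝ) := by
        rw [real_inner_comm]; exact h2
      rw [h2', real_inner_self_eq_norm_mul_norm, hθ]
      ring
    congr 1
    rw [hip]
    congr 1
    push_cast
    ring
  have stepD :
      (∫ u : (ℝ ∙ θ)ᗮ, ∫ s : ℝ, f ((u : EuclideanSpace ℝ (Fin n)) + s • θ) *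
          Complex.exp (-(Complex.I * ((σ / r : ℝ) : ℂ) * s)))
        = ftn (⇑f) ξ := by
    have hcomp : Integrable (W ∘ Ψ)
        ((volume : Measure ((ℝ ∙ θ)ᗮ : Submodule ℝ (EuclideanSpace ℝ (Fin n)))).prod volume) :=
      (hΨmp.integrable_comp hWint.aestronglyMeasurable).mpr hWint
    calc (∫ u : (ℝ ∙ θ)ᗮ, ∫ s : ℝ, f ((u : EuclideanSpace ℝ (Fin n)) + s • θ) *
            Complex.exp (-(Complex.I * ((σ / r : ℝ) : ℂ) * s)))
        = ∫ u : (ℝ ∙ θ)ᗮ, ∫ s : ℝ, W (Ψ (u, s)) := by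
          refine integral_congr_ae (Filter.Eventually.of_forall fun u => ?_) <;> beta_reduce
          refine integral_congr_ae (Filter.Eventually.of_forall fun s => ?_) <;> beta_reduce
          exact hpt u s
      _ = ∫ z : ((ℝ ∙ θ)ᗮ : Submodule ℝ (EuclideanSpace ℝ (Fin n))) × ℝ, W (Ψ (z.1, z.2)) :=
          integral_integral hcomp
      _ = ∫ z : ((ℝ ∙ θ)ᗮ : Submodule ℝ (EuclideanSpace ℝ (Fin n))) × ℝ, W (Ψ z) := rfl
      _ = ∫ x : EuclideanSpace ℝ (Fin n), W x := hΨmp.integral_comp' W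
      _ = ftn (⇑f) ξ := rfl
  -- put everything together
  calc (r : ℂ) * ∫ u : (ℝ ∙ θ)ᗮ, ∫ τ : ℝ,
        windowedRay (⇑h) (⇑f) ((u : EuclideanSpace ℝ (Fin n)) + τ • (r • θ)) (r • θ) *
          Complex.exp (-(Complex.I * σ * τ))
      = (r : ℂ) * ∫ u : (ℝ ∙ θ)ᗮ, ft1 (⇑h) (-σ) *
          (r⁻¹ • ∫ s : ℝ, f ((u : EuclideanSpace ℝ (Fin n)) + s • θ) *
            Complex.exp (-(Complex.I * ((σ / r : ℝ) : ℂ) * s))) := by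
        congr 1
        refine integral_congr_ae (Filter.Eventually.of_forall fun u => ?_) <;> beta_reduce
        rw [step0 u, stepC u]
    _ = (r : ℂ) * (ft1 (⇑h) (-σ) * (r⁻¹ • ∫ u : (ℝ ∙ θ)ᗮ,
          ∫ s : ℝ, f ((u : EuclideanSpace ℝ (Fin n)) + s • θ) *
            Complex.exp (-(Complex.I * ((σ / r : ℝ) : ℂ) * s)))) := by
        rw [integral_const_mul, integral_smul]
    _ = ftn (⇑f) ξ * ft1 (⇑h) (-σ) := by
        rw [stepD]
        rw [Complex.real_smul]
        push_cast
        field_simp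
end
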